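/- Let g : ℝⁿ → ℝⁿ be an L-Lipschitz map (with respect to ‖·‖₂) that is the gradient of a convex differentiable function h : ℝⁿ → ℝ. Then for all x, y ∈ ℝⁿ: ‖g(x) − g(y)‖₂² ≤ 2L·(h(x) − h(y) − ⟨g(y), x − y⟩). -/

import Mathlib

open InnerProductSpace

section aux

variable {n : ℕ}

-- derivative along a line
lemma line_hasDerivAt (h : EuclideanSpace ℝ (Fin n) → ℝ) (hdiff : Differentiable ℝ h)
    (a v : EuclideanSpace ℝ (Fin n)) (t : ℝ) :
    HasDerivAt (fun s : ℝ => h (a + s • v)) ⟪gradient h (a + t • v), v⟫_ℝ t := by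
  have hc : HasDerivAt (fun s : ℝ => a + s • v) v t := by
    simpa using ((hasDerivAt_id t).smul_const v).const_add a
  have hf : HasFDerivAt h ((toDualMap ℝ _) (gradient h (a + t • v))) (a + t • v) := by
    exact hasGradientAt_iff_hasFDerivAt.mp (hdiff _).hasGradientAt
  have := hf.comp_hasDerivAt t hc
  exact this

end aux

-- descent lemma
lemma descent (h : EuclideanSpace ℝ (Fin n) → ℝ) (hdiff : Differentiable ℝ h)
    (L : ℝ) (hLip : LipschitzWith L.toNNReal (fun x => gradient h x))
    (x z : EuclideanSpace ℝ (Fin n)) (hL0 : 0 ≤ L) :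
    h z ≤ h x + ⟪gradient h x, z - x⟫_ℝ + L / 2 * ‖z - x‖ ^ 2 := by
  set v := z - x with hv
  set φ' : ℝ → ℝ := fun t => ⟪gradient h (x + t • v), v⟫_ℝ with hφ'
  have hder : ∀ t : ℝ, HasDerivAt (fun s : ℝ => h (x + s • v)) (φ' t) t :=
    fun t => line_hasDerivAt h hdiff x v t
  have hcont : Continuous φ' := by
    apply Continuous.inner
    · exact hLip.continuous.comp (by continuity)
    · exact continuous_const
  have hint : h z - h x = ∫ t in (0:ℝ)..1, φ' t := by
    have := intervalIntegral.integral_eq_sub_of_hasDerivAt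
      (fun t _ => hder t) (hcont.intervalIntegrable 0 1)
    simp only [one_smul, zero_smul, add_zero] at this
    rw [this]
    simp [hv]
  have hbound : ∀ t ∈ Set.Icc (0:ℝ) 1, φ' t ≤ φ' 0 + L * t * ‖v‖ ^ 2 := by
    intro t ht
    have h1 : φ' t - φ' 0 = ⟪gradient h (x + t • v) - gradient h (x + (0:ℝ) • v), v⟫_ℝ := by
      rw [inner_sub_left]
    have h2 : ⟪gradient h (x + t • v) - gradient h (x + (0:ℝ) • v), v⟫_ℝ
        ≤ ‖gradient h (x + t • v) - gradient h (x + (0:ℝ) • v)‖ * ‖v‖ :=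
      real_inner_le_norm _ _
    have h3 : ‖gradient h (x + t • v) - gradient h (x + (0:ℝ) • v)‖ ≤ L * (t * ‖v‖) := by
      have := hLip.dist_le_mul (x + t • v) (x + (0:ℝ) • v)
      rw [dist_eq_norm] at this
      have heq : dist (x + t • v) (x + (0:ℝ) • v) = t * ‖v‖ := by
        rw [dist_eq_norm]
        simp [norm_smul, abs_of_nonneg ht.1]
      rw [heq] at this
      calc ‖gradient h (x + t • v) - gradient h (x + (0:ℝ) • v)‖ ≤ L.toNNReal * (t * ‖v‖) := this
        _ = L * (t * ‖v‖) := by rw [Real.coe_toNNReal L hL0]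
    have h4 : ⟪gradient h (x + t • v) - gradient h (x + (0:ℝ) • v), v⟫_ℝ ≤ L * (t * ‖v‖) * ‖v‖ := by
      refine h2.trans (mul_le_mul_of_nonneg_right h3 (norm_nonneg v))
    nlinarith [h1, h4]
  have hub : (∫ t in (0:ℝ)..1, φ' t) ≤ ∫ t in (0:ℝ)..1, (φ' 0 + L * t * ‖v‖ ^ 2) := by
    apply intervalIntegral.integral_mono_on zero_le_one
    · exact hcont.intervalIntegrable 0 1
    · exact (by fun_prop : Continuous fun t : ℝ => φ' 0 + L * t * ‖v‖ ^ 2).intervalIntegrable 0 1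
    · exact hbound
  have hval : (∫ t in (0:ℝ)..1, (φ' 0 + L * t * ‖v‖ ^ 2)) = φ' 0 + L / 2 * ‖v‖ ^ 2 := by
    rw [intervalIntegral.integral_add (intervalIntegrable_const)
      ((by fun_prop : Continuous fun t : ℝ => L * t * ‖v‖ ^ 2).intervalIntegrable 0 1)]
    have : (∫ t in (0:ℝ)..1, L * t * ‖v‖ ^ 2) = L / 2 * ‖v‖ ^ 2 := by
      have : (fun t : ℝ => L * t * ‖v‖ ^ 2) = fun t : ℝ => (L * ‖v‖ ^ 2) * t := by
        funext t; ring
      rw [this, intervalIntegral.integral_const_mul, integral_id]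
      ring
    rw [this]
    simp
  have hφ0 : φ' 0 = ⟪gradient h x, v⟫_ℝ := by simp [hφ']
  have := hint ▸ hub.trans_eq hval
  rw [hφ0] at this
  linarith

lemma firstorder (h : EuclideanSpace ℝ (Fin n) → ℝ) (hdiff : Differentiable ℝ h)
    (hconv : ConvexOn ℝ Set.univ h) (y z : EuclideanSpace ℝ (Fin n)) :
    h y + ⟪gradient h y, z - y⟫_ℝ ≤ h z := by
  set ψ : ℝ → ℝ := fun t => h (y + t • (z - y)) with hψ
  have hψconv : ConvexOn ℝ Set.univ ψ := by
    have := hconv.comp_affineMap (AffineMap.lineMap y z : ℝ →ᵃ[ℝ] EuclideanSpace ℝ (Fin n))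
    simp only [Set.preimage_univ] at this
    have e : ψ = h ∘ (AffineMap.lineMap y z : ℝ →ᵃ[ℝ] EuclideanSpace ℝ (Fin n)) := ?_
    · rw [e]; exact this
    funext t
    simp [hψ, AffineMap.lineMap_apply]
    congr 1
    module
  have hder0 : HasDerivAt ψ ⟪gradient h y, z - y⟫_ℝ 0 := by
    have := line_hasDerivAt h hdiff y (z - y) 0
    simpa using this
  have := hψconv.le_slope_of_hasDerivAt (Set.mem_univ 0) (Set.mem_univ 1) zero_lt_one hder0
  rw [slope_def_field] at this
  simp only [hψ, one_smul, zero_smul, add_zero] at this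
  have h1 : y + (z - y) = z := by abel
  rw [h1] at this
  have : ⟪gradient h y, z - y⟫_ℝ ≤ h z - h y := by
    convert this using 1
    field_simp
    ring
  linarith

theorem stmt_8 {n : ℕ} (h : EuclideanSpace ℝ (Fin n) → ℝ)
    (hdiff : Differentiable ℝ h) (hconv : ConvexOn ℝ Set.univ h)
    (L : ℝ) (hL0 : 0 ≤ L)
    (g : EuclideanSpace ℝ (Fin n) → EuclideanSpace ℝ (Fin n))
    (hg : ∀ x, g x = gradient h x)
    (hLip : LipschitzWith L.toNNReal g)
    (x y : EuclideanSpace ℝ (Fin n)) :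
    ‖g x - g y‖ ^ 2 ≤ 2 * L * (h x - h y - ⟪g y, x - y⟫_ℝ) := by
  have hg' : g = fun x => gradient h x := funext hg
  rcases eq_or_lt_of_le hL0 with hL | hL
  · -- L = 0 : g is constant
    have hgxy : g x = g y := by
      have := hLip.dist_le_mul x y
      rw [← hL] at this
      simp at this
      have : dist (g x) (g y) = 0 := le_antisymm (by simpa using this) dist_nonneg
      exact dist_eq_zero.mp this
    rw [hgxy]
    simp [← hL]
  · -- L > 0
    set d := g x - g y with hd
    set z := x - (1 / L) • d with hz
    have hdesc := descent h hdiff L (hg' ▸ hLip) x z hL0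
    have hfo := firstorder h hdiff hconv y z
    rw [← hg y] at hfo
    have hzx : z - x = -((1/L) • d) := by rw [hz]; abel
    have hzy : z - y = (x - y) - (1/L) • d := by rw [hz]; abel
    rw [hzx] at hdesc
    rw [hzy] at hfo
    rw [inner_neg_right, inner_smul_right] at hdesc
    rw [← hg x] at hdesc
    rw [inner_sub_right, inner_smul_right] at hfo
    have hnz : ‖-((1/L) • d)‖ ^ 2 = (1/L)^2 * ‖d‖^2 := by
      rw [norm_neg, norm_smul]
      rw [Real.norm_eq_abs, abs_of_pos (by positivity : (0:ℝ) < 1/L)]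
      ring
    rw [hnz] at hdesc
    have hdd : ⟪g x, d⟫_ℝ - ⟪g y, d⟫_ℝ = ‖d‖^2 := by
      rw [← inner_sub_left, ← hd, real_inner_self_eq_norm_sq]
    have hLne : L ≠ 0 := ne_of_gt hL
    have h5 : L / 2 * ((1 / L) ^ 2 * ‖d‖ ^ 2) = 1 / (2 * L) * ‖d‖ ^ 2 := by
      field_simp
    have key : h y + (⟪g y, x - y⟫_ℝ - 1 / L * ⟪g y, d⟫_ℝ)
        ≤ h x + -(1 / L * ⟪g x, d⟫_ℝ) + 1 / (2 * L) * ‖d‖ ^ 2 := by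
      have := hfo.trans hdesc
      linarith
    have h6 : 1 / L * ⟪g x, d⟫_ℝ - 1 / L * ⟪g y, d⟫_ℝ = 1 / L * ‖d‖ ^ 2 := by
      rw [← mul_sub, hdd]
    have h8 : 1 / L * ‖d‖ ^ 2 - 1 / (2 * L) * ‖d‖ ^ 2 = 1 / (2 * L) * ‖d‖ ^ 2 := by
      field_simp; ring
    have h9 : 1 / (2 * L) * ‖d‖ ^ 2 ≤ h x - h y - ⟪g y, x - y⟫_ℝ := by linarith
    calc ‖d‖ ^ 2 = 2 * L * (1 / (2 * L) * ‖d‖ ^ 2) := by field_simp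
      _ ≤ 2 * L * (h x - h y - ⟪g y, x - y⟫_ℝ) :=
          mul_le_mul_of_nonneg_left h9 (by positivity)
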